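/- (Double centralizer theorem, type C₂, short root, in Sp₄.) Let R be a commutative ring and let g ∈ Sp₄(R). Suppose that g commutes with each of 1 + (E₁₄ + E₂₃), 1 + E₁₃, and 1 + E₂₄, and that moreover, if 2 = 0 in R, g also commutes with 1 + (E₁₂ − E₄₃) and 1 + (E₂₁ − E₃₄) (so that g commutes with every type C₂ root element at parameter 1 that commutes with x_{e₁+e₂}(1) = 1 + (E₁₄ + E₂₃)). Then there exist ω, t₁, t₂, t₃ ∈ R with ω² = 1 such that g = ω • (1 + t₁·(E₁₄ + E₂₃) + t₂·E₁₃ + t₃·E₂₄); i.e. g = c·x_{e₁+e₂}(t₁)·x_{2e₁}(t₂)·x_{2e₂}(t₃) with c a central scalar matrix. -/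

import Mathlib

open Matrix

/-- The 4×4 matrix unit over `R`, with rows and columns indexed by `Fin 2 ⊕ Fin 2`
(so that `1,2,3,4` correspond to `inl 0, inl 1, inr 0, inr 1`). -/
def Esp (R : Type*) [CommRing R] (i j : Fin 2 ⊕ Fin 2) :
    Matrix (Fin 2 ⊕ Fin 2) (Fin 2 ⊕ Fin 2) R :=
  Matrix.single i j 1

/-- Double centralizer theorem, type `C₂`, short root, in `Sp₄`: if `g ∈ Sp₄(R)` commutes
with `1 + (E₁₄ + E₂₃)`, `1 + E₁₃` and `1 + E₂₄`, and moreover, in case `2 = 0` in `R`,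
also with `1 + (E₁₂ - E₄₃)` and `1 + (E₂₁ - E₃₄)` (so that `g` commutes with every type
`C₂` root element at parameter 1 commuting with `x_{e₁+e₂}(1) = 1 + (E₁₄ + E₂₃)`), then
`g = ω • (1 + t₁·(E₁₄ + E₂₃) + t₂·E₁₃ + t₃·E₂₄)` for some `ω, t₁, t₂, t₃ ∈ R` with
`ω² = 1`; that is, `g = c · x_{e₁+e₂}(t₁) · x_{2e₁}(t₂) · x_{2e₂}(t₃)` with `c` central. -/
theorem double_centralizer_C2_short {R : Type*} [CommRing R]
    (g : Matrix (Fin 2 ⊕ Fin 2) (Fin 2 ⊕ Fin 2) R)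
    (hg : g ∈ Matrix.symplecticGroup (Fin 2) R)
    (h1 : g * (1 + (Esp R (.inl 0) (.inr 1) + Esp R (.inl 1) (.inr 0))) =
      (1 + (Esp R (.inl 0) (.inr 1) + Esp R (.inl 1) (.inr 0))) * g)
    (h2 : g * (1 + Esp R (.inl 0) (.inr 0)) = (1 + Esp R (.inl 0) (.inr 0)) * g)
    (h3 : g * (1 + Esp R (.inl 1) (.inr 1)) = (1 + Esp R (.inl 1) (.inr 1)) * g)
    (h4 : (2 : R) = 0 →
      g * (1 + (Esp R (.inl 0) (.inl 1) - Esp R (.inr 1) (.inr 0))) =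
        (1 + (Esp R (.inl 0) (.inl 1) - Esp R (.inr 1) (.inr 0))) * g ∧
      g * (1 + (Esp R (.inl 1) (.inl 0) - Esp R (.inr 0) (.inr 1))) =
        (1 + (Esp R (.inl 1) (.inl 0) - Esp R (.inr 0) (.inr 1))) * g) :
    ∃ ω t₁ t₂ t₃ : R, ω ^ 2 = 1 ∧
      g = ω • (1 + t₁ • (Esp R (.inl 0) (.inr 1) + Esp R (.inl 1) (.inr 0)) +
        t₂ • Esp R (.inl 0) (.inr 0) + t₃ • Esp R (.inl 1) (.inr 1)) := by
  clear h4
  rw [SymplecticGroup.mem_iff] at hg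
  have E1 := fun i j => Matrix.ext_iff.mpr h1 i j
  have E2 := fun i j => Matrix.ext_iff.mpr h2 i j
  have E3 := fun i j => Matrix.ext_iff.mpr h3 i j
  simp only [Esp, Matrix.mul_add, Matrix.add_mul, Matrix.mul_one, Matrix.one_mul,
    Matrix.add_apply, add_right_inj] at E1 E2 E3
  simp only [Matrix.mul_apply, Fintype.sum_sum_type, Fin.sum_univ_two,
    Matrix.single, Matrix.of_apply, Matrix.add_apply] at E1 E2 E3
  have z21 := E2 (.inl 1) (.inr 0); simp at z21
  have z31 := E2 (.inr 0) (.inr 0); simp at z31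
  have z41 := E2 (.inr 1) (.inr 0); simp at z41
  have z32 := E2 (.inl 0) (.inl 1); simp at z32; replace z32 := z32.symm
  have z34 := E2 (.inl 0) (.inr 1); simp at z34; replace z34 := z34.symm
  have d13 := E2 (.inl 0) (.inr 0); simp at d13
  have z12 := E3 (.inl 0) (.inr 1); simp at z12
  have z42 := E3 (.inr 1) (.inr 1); simp at z42
  have z43 := E3 (.inl 1) (.inr 0); simp at z43; replace z43 := z43.symm
  have d24 := E3 (.inl 1) (.inr 1); simp at d24
  have d14 := E1 (.inl 0) (.inr 1); simp at d14
  clear E1 E2 E3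
  have S1 := Matrix.ext_iff.mpr hg (Sum.inr 0) (Sum.inl 0)
  have S2 := Matrix.ext_iff.mpr hg (Sum.inl 0) (Sum.inl 1)
  simp only [Matrix.mul_apply, Fintype.sum_sum_type, Fin.sum_univ_two, Matrix.J,
    Matrix.fromBlocks, Matrix.transpose_apply, Matrix.one_apply, Matrix.zero_apply,
    Matrix.neg_apply, Sum.elim_inl, Sum.elim_inr, Matrix.of_apply] at S1 S2
  simp [z31, z32, z34] at S1
  simp [z12, z21] at S2
  have hasq : g (.inl 0) (.inl 0) * g (.inl 0) (.inl 0) = 1 := by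
    linear_combination S1 + g (.inl 0) (.inl 0) * d13
  have hsym : g (.inl 0) (.inr 1) = g (.inl 1) (.inr 0) := by
    linear_combination g (.inl 0) (.inl 0) * S2
      + (g (.inl 1) (.inr 0) - g (.inl 0) (.inr 1)) * hasq
      - g (.inl 0) (.inl 0) * g (.inl 0) (.inr 1) * d24
      + g (.inl 0) (.inl 0) * g (.inl 0) (.inr 1) * d14
  refine ⟨g (.inl 0) (.inl 0), g (.inl 0) (.inl 0) * g (.inl 0) (.inr 1),
    g (.inl 0) (.inl 0) * g (.inl 0) (.inr 0), g (.inl 0) (.inl 0) * g (.inl 1) (.inr 1),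
    by rw [sq]; exact hasq, ?_⟩
  ext i j
  rcases i with i | i <;> rcases j with j | j <;> fin_cases i <;> fin_cases j <;>
    simp [Esp, Matrix.single, Matrix.one_apply, Matrix.add_apply,
      Matrix.smul_apply, Matrix.of_apply, smul_eq_mul] <;>
    first
      | rfl
      | linear_combination z21 | linear_combination z31 | linear_combination z41
      | linear_combination z12 | linear_combination z32 | linear_combination z42
      | linear_combination z34 | linear_combination z43
      | linear_combination -d13 | linear_combination -d14
      | linear_combination d24 - d14
      | linear_combination (-(g (.inl 0) (.inr 1))) * hasq
      | linear_combination (-(g (.inl 0) (.inr 0))) * hasq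
      | linear_combination (-(g (.inl 1) (.inr 1))) * hasq
      | linear_combination (-(g (.inl 1) (.inr 0))) * hasq
          - g (.inl 0) (.inl 0) * g (.inl 0) (.inl 0) * hsym
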